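/- Let X be a real Hilbert space, F : X → X Lipschitz with constant L, and x₁,…,x_N independent X-valued random variables with E[‖x_i‖²] ≤ C. Then with m = (1/N)∑ x_i, for each i, |E[⟨F(m), x_i⟩] − ⟨F(E m), E x_i⟩| ≤ 2LC/N + √C · L·√(C/N). -/

import Mathlib

open MeasureTheory ProbabilityTheory
open scoped RealInnerProductSpace BigOperators

lemma indep_integral_inner_sep {Ω : Type*} [MeasurableSpace Ω] {μ : Measure Ω}
    [IsProbabilityMeasure μ]
    {Y : Type*} [NormedAddCommGroup Y] [InnerProductSpace ℝ Y] [CompleteSpace Y]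
    [SecondCountableTopology Y] [MeasurableSpace Y] [BorelSpace Y]
    {f g : Ω → Y} (h : IndepFun f g μ) (hf : Integrable f μ) (hg : Integrable g μ) :
    ∫ ω, ⟪f ω, g ω⟫ ∂μ = ⟪∫ ω, f ω ∂μ, ∫ ω, g ω ∂μ⟫ := by
  have hfm : AEMeasurable f μ := hf.aemeasurable
  have hgm : AEMeasurable g μ := hg.aemeasurable
  have hmap : μ.map (fun ω => (f ω, g ω)) = (μ.map f).prod (μ.map g) :=
    (indepFun_iff_map_prod_eq_prod_map_map hfm hgm).mp h
  have hcont : Continuous (fun p : Y × Y => ⟪p.1, p.2⟫) := continuous_inner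
  have hif : Integrable (id : Y → Y) (μ.map f) := by
    rw [integrable_map_measure aestronglyMeasurable_id hfm]; exact hf
  have hig : Integrable (id : Y → Y) (μ.map g) := by
    rw [integrable_map_measure aestronglyMeasurable_id hgm]; exact hg
  have h1 : ∫ ω, ⟪f ω, g ω⟫ ∂μ
      = ∫ p : Y × Y, ⟪p.1, p.2⟫ ∂(μ.map (fun ω => (f ω, g ω))) := by
    rw [integral_map (hfm.prodMk hgm) hcont.aestronglyMeasurable]
  have hprod : Integrable (fun p : Y × Y => ⟪p.1, p.2⟫) ((μ.map f).prod (μ.map g)) := by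
    have hmul : Integrable (fun p : Y × Y => ‖(id p.1 : Y)‖ * ‖(id p.2 : Y)‖)
        ((μ.map f).prod (μ.map g)) := hif.norm.mul_prod hig.norm
    refine hmul.mono hcont.aestronglyMeasurable (Filter.Eventually.of_forall fun p => ?_)
    simp only [id_eq, Real.norm_eq_abs, abs_mul, abs_norm]
    exact abs_real_inner_le_norm _ _
  rw [h1, hmap, integral_prod _ hprod]
  have h2 : ∀ u : Y, ∫ v, ⟪u, v⟫ ∂(μ.map g) = ⟪u, ∫ v, v ∂(μ.map g)⟫ := fun u =>
    integral_inner hig u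
  simp_rw [h2]
  have h3 : ∫ u, ⟪u, ∫ v, v ∂(μ.map g)⟫ ∂(μ.map f)
      = ⟪∫ u, u ∂(μ.map f), ∫ v, v ∂(μ.map g)⟫ := by
    have he : (fun u : Y => ⟪u, ∫ v, v ∂(μ.map g)⟫)
        = fun u : Y => ⟪∫ v, v ∂(μ.map g), u⟫ := funext fun u => real_inner_comm _ _
    rw [he]
    exact (integral_inner hif _).trans (real_inner_comm _ _)
  have h4 : ∫ u, u ∂(μ.map f) = ∫ ω, f ω ∂μ := integral_map hfm aestronglyMeasurable_id
  have h5 : ∫ v, v ∂(μ.map g) = ∫ ω, g ω ∂μ := integral_map hgm aestronglyMeasurable_id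
  rw [h3, h4, h5]

lemma indep_integral_inner {Ω : Type*} [MeasurableSpace Ω] {μ : Measure Ω}
    [IsProbabilityMeasure μ]
    {X : Type*} [NormedAddCommGroup X] [InnerProductSpace ℝ X] [CompleteSpace X]
    [MeasurableSpace X] [BorelSpace X]
    {f g : Ω → X} (h : IndepFun f g μ) (hf : Integrable f μ) (hg : Integrable g μ) :
    ∫ ω, ⟪f ω, g ω⟫ ∂μ = ⟪∫ ω, f ω ∂μ, ∫ ω, g ω ∂μ⟫ := by
  have hfsm := hf.1
  have hgsm := hg.1
  set f' := hfsm.mk f with hf'def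
  set g' := hgsm.mk g with hg'def
  have hff' : f =ᵐ[μ] f' := hfsm.ae_eq_mk
  have hgg' : g =ᵐ[μ] g' := hgsm.ae_eq_mk
  have hsep : TopologicalSpace.IsSeparable (Set.range f' ∪ Set.range g') :=
    (hfsm.stronglyMeasurable_mk.isSeparable_range).union
      (hgsm.stronglyMeasurable_mk.isSeparable_range)
  set K : Submodule ℝ X := (Submodule.span ℝ (Set.range f' ∪ Set.range g')).topologicalClosure
    with hKdef
  have hKsep : TopologicalSpace.IsSeparable (K : Set X) := by
    rw [hKdef, Submodule.topologicalClosure_coe]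
    exact (hsep.span (R := ℝ)).closure
  haveI : CompleteSpace K :=
    Submodule.topologicalClosure.completeSpace (Submodule.span ℝ (Set.range f' ∪ Set.range g'))
  haveI : SecondCountableTopology K := hKsep.secondCountableTopology
  set P := K.orthogonalProjectionOnto with hPdef
  set F1 : Ω → K := fun ω => P (f' ω) with hF1def
  set G1 : Ω → K := fun ω => P (g' ω) with hG1def
  have hmemf : ∀ ω, f' ω ∈ K := fun ω =>
    Submodule.le_topologicalClosure _ (Submodule.subset_span (Or.inl ⟨ω, rfl⟩))
  have hmemg : ∀ ω, g' ω ∈ K := fun ω =>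
    Submodule.le_topologicalClosure _ (Submodule.subset_span (Or.inr ⟨ω, rfl⟩))
  have hcoef : ∀ ω, (F1 ω : X) = f' ω := fun ω => by
    rw [hF1def]
    exact congrArg _ (K.orthogonalProjectionOnto_mem_subspace_eq_self (⟨f' ω, hmemf ω⟩ : K))
  have hcoeg : ∀ ω, (G1 ω : X) = g' ω := fun ω => by
    rw [hG1def]
    exact congrArg _ (K.orthogonalProjectionOnto_mem_subspace_eq_self (⟨g' ω, hmemg ω⟩ : K))
  have hPm : Measurable (P : X → K) := P.continuous.measurable
  have hindep1 : IndepFun F1 G1 μ := (h.congr hff' hgg').comp hPm hPm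
  have hF1int : Integrable F1 μ := P.integrable_comp (hf.congr hff')
  have hG1int : Integrable G1 μ := P.integrable_comp (hg.congr hgg')
  have key := indep_integral_inner_sep hindep1 hF1int hG1int
  have e1 : ∫ ω, ⟪f ω, g ω⟫ ∂μ = ∫ ω, (⟪F1 ω, G1 ω⟫ : ℝ) ∂μ := by
    refine integral_congr_ae ?_
    filter_upwards [hff', hgg'] with ω h1 h2
    rw [Submodule.coe_inner, hcoef ω, hcoeg ω, h1, h2]
  have e2 : ∫ ω, f ω ∂μ = (↑(∫ ω, F1 ω ∂μ) : X) := by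
    calc ∫ ω, f ω ∂μ = ∫ ω, (K.subtypeL (F1 ω) : X) ∂μ := by
          refine integral_congr_ae ?_
          filter_upwards [hff'] with ω h1
          rw [h1]
          exact (hcoef ω).symm
      _ = (↑(∫ ω, F1 ω ∂μ) : X) := K.subtypeL.integral_comp_comm hF1int
  have e3 : ∫ ω, g ω ∂μ = (↑(∫ ω, G1 ω ∂μ) : X) := by
    calc ∫ ω, g ω ∂μ = ∫ ω, (K.subtypeL (G1 ω) : X) ∂μ := by
          refine integral_congr_ae ?_
          filter_upwards [hgg'] with ω h1
          rw [h1]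
          exact (hcoeg ω).symm
      _ = (↑(∫ ω, G1 ω ∂μ) : X) := K.subtypeL.integral_comp_comm hG1int
  rw [e1, key, e2, e3, ← Submodule.coe_inner]

lemma integral_mul_le_sqrt_mul_sqrt {Ω : Type*} [MeasurableSpace Ω] {μ : Measure Ω}
    {f g : Ω → ℝ} (hf : ∀ ω, 0 ≤ f ω) (hg : ∀ ω, 0 ≤ g ω)
    (hfm : AEStronglyMeasurable f μ) (hgm : AEStronglyMeasurable g μ)
    (hf2 : Integrable (fun ω => f ω ^ 2) μ) (hg2 : Integrable (fun ω => g ω ^ 2) μ) :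
    ∫ ω, f ω * g ω ∂μ ≤ Real.sqrt (∫ ω, f ω ^ 2 ∂μ) * Real.sqrt (∫ ω, g ω ^ 2 ∂μ) := by
  set A := ∫ ω, f ω ^ 2 ∂μ with hA
  set B := ∫ ω, g ω ^ 2 ∂μ with hB
  have hA0 : 0 ≤ A := integral_nonneg fun ω => sq_nonneg _
  have hB0 : 0 ≤ B := integral_nonneg fun ω => sq_nonneg _
  have hfg : Integrable (fun ω => f ω * g ω) μ := by
    refine Integrable.mono' ((hf2.add hg2).div_const 2) (hfm.mul hgm)
      (Filter.Eventually.of_forall fun ω => ?_)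
    rw [Real.norm_eq_abs, abs_of_nonneg (mul_nonneg (hf ω) (hg ω))]
    simp only [Pi.add_apply]
    nlinarith [sq_nonneg (f ω - g ω)]
  rcases eq_or_lt_of_le hA0 with hA0' | hA0'
  · have hf0 : f =ᵐ[μ] 0 := by
      have h2 : (fun ω => f ω ^ 2) =ᵐ[μ] 0 :=
        (integral_eq_zero_iff_of_nonneg (fun ω => sq_nonneg _) hf2).mp hA0'.symm
      filter_upwards [h2] with ω hω
      have : f ω ^ 2 = 0 := hω
      exact pow_eq_zero_iff (n := 2) (by norm_num) |>.mp this
    have : ∫ ω, f ω * g ω ∂μ = 0 := by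
      rw [integral_eq_zero_iff_of_nonneg (fun ω => mul_nonneg (hf ω) (hg ω)) hfg]
      filter_upwards [hf0] with ω hω
      simp [hω]
    rw [this]
    positivity
  rcases eq_or_lt_of_le hB0 with hB0' | hB0'
  · have hg0 : g =ᵐ[μ] 0 := by
      have h2 : (fun ω => g ω ^ 2) =ᵐ[μ] 0 :=
        (integral_eq_zero_iff_of_nonneg (fun ω => sq_nonneg _) hg2).mp hB0'.symm
      filter_upwards [h2] with ω hω
      have : g ω ^ 2 = 0 := hω
      exact pow_eq_zero_iff (n := 2) (by norm_num) |>.mp this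
    have : ∫ ω, f ω * g ω ∂μ = 0 := by
      rw [integral_eq_zero_iff_of_nonneg (fun ω => mul_nonneg (hf ω) (hg ω)) hfg]
      filter_upwards [hg0] with ω hω
      simp [hω]
    rw [this]
    positivity
  · have key : 0 ≤ ∫ ω, (Real.sqrt B * f ω - Real.sqrt A * g ω) ^ 2 ∂μ :=
      integral_nonneg fun ω => sq_nonneg _
    have expand : ∫ ω, (Real.sqrt B * f ω - Real.sqrt A * g ω) ^ 2 ∂μ
        = B * A - 2 * (Real.sqrt A * Real.sqrt B) * ∫ ω, f ω * g ω ∂μ + A * B := by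
      have hptw : ∀ ω, (Real.sqrt B * f ω - Real.sqrt A * g ω) ^ 2
          = B * f ω ^ 2 - 2 * (Real.sqrt A * Real.sqrt B) * (f ω * g ω)
            + A * g ω ^ 2 := by
        intro ω
        have hsB : Real.sqrt B ^ 2 = B := Real.sq_sqrt hB0
        have hsA : Real.sqrt A ^ 2 = A := Real.sq_sqrt hA0
        nlinarith [hsA, hsB]
      simp_rw [hptw]
      have h1 : Integrable (fun ω => B * f ω ^ 2
          - 2 * (Real.sqrt A * Real.sqrt B) * (f ω * g ω)) μ :=
        (hf2.const_mul B).sub (hfg.const_mul _)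
      have h2 : Integrable (fun ω => A * g ω ^ 2) μ := hg2.const_mul A
      rw [integral_add h1 h2, integral_sub (hf2.const_mul B) (hfg.const_mul _),
        integral_const_mul, integral_const_mul, integral_const_mul, ← hA, ← hB]
    rw [expand] at key
    have hABpos : 0 < Real.sqrt A * Real.sqrt B :=
      mul_pos (Real.sqrt_pos.mpr hA0') (Real.sqrt_pos.mpr hB0')
    have hAB : Real.sqrt A * Real.sqrt B * (Real.sqrt A * Real.sqrt B) = A * B := by
      rw [mul_mul_mul_comm, Real.mul_self_sqrt hA0, Real.mul_self_sqrt hB0]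
    nlinarith [key, hAB, hABpos]

theorem stmt5 {Ω : Type*} [MeasurableSpace Ω] {μ : Measure Ω} [IsProbabilityMeasure μ]
    {X : Type*} [NormedAddCommGroup X] [InnerProductSpace ℝ X] [CompleteSpace X]
    [MeasurableSpace X] [BorelSpace X]
    {N : ℕ} (hN : 0 < N) {F : X → X} {L C : ℝ} (hL : 0 ≤ L) (hC : 0 ≤ C)
    (hF : ∀ a b : X, ‖F a - F b‖ ≤ L * ‖a - b‖)
    {x : Fin N → Ω → X}
    (hindep : Pairwise fun i j => IndepFun (x i) (x j) μ)
    (hint : ∀ i, Integrable (x i) μ)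
    (hsq : ∀ i, Integrable (fun ω => ‖x i ω‖ ^ 2) μ)
    (hx2 : ∀ i, ∫ ω, ‖x i ω‖ ^ 2 ∂μ ≤ C)
    (hFm : Integrable (fun ω => F ((N : ℝ)⁻¹ • ∑ j, x j ω)) μ)
    (hintF : ∀ i, Integrable (fun ω => ⟪F ((N : ℝ)⁻¹ • ∑ j, x j ω), x i ω⟫) μ)
    (hintF' : ∀ i, Integrable
      (fun ω => ⟪F ((N : ℝ)⁻¹ • ∑ j ∈ Finset.univ.erase i, x j ω), x i ω⟫) μ)
    (i : Fin N) :
    |(∫ ω, ⟪F ((N : ℝ)⁻¹ • ∑ j, x j ω), x i ω⟫ ∂μ) -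
      ⟪F (∫ ω, (N : ℝ)⁻¹ • ∑ j, x j ω ∂μ), ∫ ω, x i ω ∂μ⟫| ≤
      2 * L * C / N + Real.sqrt C * (L * Real.sqrt (C / N)) := by
  have hNpos : (0:ℝ) < N := Nat.cast_pos.mpr hN
  have hNne : (N:ℝ) ≠ 0 := ne_of_gt hNpos
  set m : Ω → X := fun ω => (N : ℝ)⁻¹ • ∑ j, x j ω with hmdef
  have hmint : Integrable m μ :=
    (integrable_finset_sum Finset.univ fun j _ => hint j).smul ((N:ℝ)⁻¹)
  set Em := ∫ ω, m ω ∂μ with hEmdef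
  set c : Fin N → X := fun j => ∫ ω, x j ω ∂μ with hcdef
  set g : Fin N → Ω → X := fun j ω => x j ω - c j with hgdef
  have hgint : ∀ j, Integrable (g j) μ := fun j => (hint j).sub (integrable_const (c j))
  have hgm : ∀ j, AEStronglyMeasurable (g j) μ := fun j => (hgint j).1
  have hgmean : ∀ j, ∫ ω, g j ω ∂μ = 0 := by
    intro j
    rw [hgdef]
    rw [integral_sub (hint j) (integrable_const (c j)), integral_const, probReal_univ,
      one_smul]
    exact sub_eq_zero.mpr rfl
  have hg2ptw : ∀ j ω, ‖g j ω‖ ^ 2 = ‖x j ω‖ ^ 2 - 2 * ⟪x j ω, c j⟫ + ‖c j‖ ^ 2 := by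
    intro j ω
    rw [hgdef]
    exact norm_sub_sq_real _ _
  have hg2 : ∀ j, Integrable (fun ω => ‖g j ω‖ ^ 2) μ := by
    intro j
    have h1 : Integrable (fun ω => ‖x j ω‖ ^ 2 - 2 * ⟪x j ω, c j⟫) μ :=
      (hsq j).sub (((hint j).inner_const (c j)).const_mul 2)
    have h2 : Integrable (fun ω => ‖x j ω‖ ^ 2 - 2 * ⟪x j ω, c j⟫ + ‖c j‖ ^ 2) μ :=
      h1.add (integrable_const _)
    exact h2.congr (Filter.Eventually.of_forall fun ω => (hg2ptw j ω).symm)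
  have hinnerint : ∀ j, Integrable (fun ω => ⟪x j ω, c j⟫) μ := fun j =>
    (hint j).inner_const (c j)
  have hg2val : ∀ j, ∫ ω, ‖g j ω‖ ^ 2 ∂μ ≤ C := by
    intro j
    have he : ∫ ω, ‖g j ω‖ ^ 2 ∂μ
        = ∫ ω, (‖x j ω‖ ^ 2 - 2 * ⟪x j ω, c j⟫ + ‖c j‖ ^ 2) ∂μ :=
      integral_congr_ae (Filter.Eventually.of_forall fun ω => hg2ptw j ω)
    have hic : ∫ ω, ⟪x j ω, c j⟫ ∂μ = ‖c j‖ ^ 2 := by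
      have hcomm : (fun ω => ⟪x j ω, c j⟫) = fun ω => ⟪c j, x j ω⟫ :=
        funext fun ω => real_inner_comm _ _
      rw [hcomm, integral_inner (hint j)]
      exact real_inner_self_eq_norm_sq (c j)
    have ha : Integrable (fun ω => ‖x j ω‖ ^ 2 - 2 * ⟪x j ω, c j⟫) μ :=
      (hsq j).sub ((hinnerint j).const_mul 2)
    rw [he, integral_add ha (integrable_const _),
      integral_sub (hsq j) ((hinnerint j).const_mul 2), integral_const_mul, hic,
      integral_const, probReal_univ, one_smul]
    have := hx2 j
    nlinarith [sq_nonneg (‖c j‖)]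
  have hginner : ∀ j k, Integrable (fun ω => ⟪g j ω, g k ω⟫) μ := by
    intro j k
    refine Integrable.mono' (((hg2 j).add (hg2 k)).div_const 2)
      ((hgm j).inner (hgm k)) (Filter.Eventually.of_forall fun ω => ?_)
    simp only [Pi.add_apply, Real.norm_eq_abs]
    refine (abs_real_inner_le_norm _ _).trans ?_
    nlinarith [sq_nonneg (‖g j ω‖ - ‖g k ω‖)]
  have hcross : ∀ j k, j ≠ k → ∫ ω, ⟪g j ω, g k ω⟫ ∂μ = 0 := by
    intro j k hjk
    have hi : IndepFun (g j) (g k) μ :=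
      (hindep hjk).comp (continuous_id.sub continuous_const).measurable
        (continuous_id.sub continuous_const).measurable
    rw [indep_integral_inner hi (hgint j) (hgint k), hgmean j, hgmean k,
      inner_zero_left]
  have hsumsq : ∀ ω, ‖∑ j, g j ω‖ ^ 2 = ∑ j, ∑ k, ⟪g j ω, g k ω⟫ := by
    intro ω
    rw [← real_inner_self_eq_norm_sq, sum_inner]
    exact Finset.sum_congr rfl fun j _ => inner_sum _ _ _
  have hSint : Integrable (fun ω => ∑ j, ∑ k, ⟪g j ω, g k ω⟫) μ :=
    integrable_finset_sum _ fun j _ => integrable_finset_sum _ fun k _ => hginner j k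
  have hSval : ∫ ω, (∑ j, ∑ k, ⟪g j ω, g k ω⟫) ∂μ ≤ N * C := by
    rw [integral_finset_sum _ fun j _ => integrable_finset_sum _ fun k _ => hginner j k]
    have hstep : ∀ j : Fin N, ∫ ω, (∑ k, ⟪g j ω, g k ω⟫) ∂μ ≤ C := by
      intro j
      rw [integral_finset_sum _ fun k _ => hginner j k]
      have hsingle : ∑ k, ∫ ω, ⟪g j ω, g k ω⟫ ∂μ = ∫ ω, ⟪g j ω, g j ω⟫ ∂μ :=
        Finset.sum_eq_single_of_mem j (Finset.mem_univ j)
          (fun k _ hkj => hcross j k (Ne.symm hkj))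
      rw [hsingle]
      have : ∫ ω, ⟪g j ω, g j ω⟫ ∂μ = ∫ ω, ‖g j ω‖ ^ 2 ∂μ :=
        integral_congr_ae (Filter.Eventually.of_forall fun ω => real_inner_self_eq_norm_sq _)
      rw [this]
      exact hg2val j
    calc ∑ j, ∫ ω, (∑ k, ⟪g j ω, g k ω⟫) ∂μ ≤ ∑ _j : Fin N, C :=
          Finset.sum_le_sum fun j _ => hstep j
      _ = N * C := by rw [Finset.sum_const, Finset.card_univ, Fintype.card_fin,
            nsmul_eq_mul]
  have hEm' : Em = (N:ℝ)⁻¹ • ∑ j, c j := by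
    rw [hEmdef, hmdef]
    rw [integral_smul, integral_finset_sum _ fun j _ => hint j]
  have hmm : ∀ ω, m ω - Em = (N:ℝ)⁻¹ • ∑ j, g j ω := by
    intro ω
    rw [hEm', hmdef, hgdef, ← smul_sub, ← Finset.sum_sub_distrib]
  have hnormsq : ∀ ω, ‖m ω - Em‖ ^ 2 = ((N:ℝ)⁻¹) ^ 2 * ‖∑ j, g j ω‖ ^ 2 := by
    intro ω
    rw [hmm ω, norm_smul, mul_pow, Real.norm_eq_abs,
      abs_of_nonneg (by positivity : (0:ℝ) ≤ (N:ℝ)⁻¹)]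
  have hvarint : Integrable (fun ω => ‖m ω - Em‖ ^ 2) μ := by
    refine (hSint.const_mul (((N:ℝ)⁻¹) ^ 2)).congr
      (Filter.Eventually.of_forall fun ω => ?_)
    show ((N:ℝ)⁻¹) ^ 2 * ∑ j, ∑ k, ⟪g j ω, g k ω⟫ = ‖m ω - Em‖ ^ 2
    rw [hnormsq ω, hsumsq ω]
  have hvar : ∫ ω, ‖m ω - Em‖ ^ 2 ∂μ ≤ C / N := by
    have he : ∫ ω, ‖m ω - Em‖ ^ 2 ∂μ
        = ((N:ℝ)⁻¹) ^ 2 * ∫ ω, (∑ j, ∑ k, ⟪g j ω, g k ω⟫) ∂μ := by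
      rw [← integral_const_mul]
      exact integral_congr_ae (Filter.Eventually.of_forall fun ω => by
        show ‖m ω - Em‖ ^ 2 = ((N:ℝ)⁻¹) ^ 2 * ∑ j, ∑ k, ⟪g j ω, g k ω⟫
        rw [hnormsq ω, hsumsq ω])
    rw [he]
    calc ((N:ℝ)⁻¹) ^ 2 * ∫ ω, (∑ j, ∑ k, ⟪g j ω, g k ω⟫) ∂μ
        ≤ ((N:ℝ)⁻¹) ^ 2 * (N * C) :=
          mul_le_mul_of_nonneg_left hSval (by positivity)
      _ = C / N := by field_simp
  -- main estimate
  have h0 : ⟪F Em, ∫ ω, x i ω ∂μ⟫ = ∫ ω, ⟪F Em, x i ω⟫ ∂μ :=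
    (integral_inner (hint i) (F Em)).symm
  rw [h0, ← integral_sub (hintF i) ((hint i).const_inner (F Em))]
  have hinn : ∀ ω, ⟪F (m ω), x i ω⟫ - ⟪F Em, x i ω⟫ = ⟪F (m ω) - F Em, x i ω⟫ :=
    fun ω => (inner_sub_left _ _ _).symm
  have hprodint : Integrable (fun ω => ‖m ω - Em‖ * ‖x i ω‖) μ := by
    refine Integrable.mono' ((hvarint.add (hsq i)).div_const 2)
      (((hmint.sub (integrable_const Em)).1.norm).mul ((hint i).1.norm))
      (Filter.Eventually.of_forall fun ω => ?_)
    simp only [Pi.add_apply, Real.norm_eq_abs,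
      abs_of_nonneg (mul_nonneg (norm_nonneg _) (norm_nonneg _))]
    nlinarith [sq_nonneg (‖m ω - Em‖ - ‖x i ω‖)]
  have hbint : Integrable (fun ω => L * (‖m ω - Em‖ * ‖x i ω‖)) μ := hprodint.const_mul L
  have habs : |∫ ω, (⟪F (m ω), x i ω⟫ - ⟪F Em, x i ω⟫) ∂μ|
      ≤ ∫ ω, L * (‖m ω - Em‖ * ‖x i ω‖) ∂μ := by
    rw [← Real.norm_eq_abs]
    refine norm_integral_le_of_norm_le hbint (Filter.Eventually.of_forall fun ω => ?_)
    rw [Real.norm_eq_abs, hinn ω]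
    calc |⟪F (m ω) - F Em, x i ω⟫| ≤ ‖F (m ω) - F Em‖ * ‖x i ω‖ :=
          abs_real_inner_le_norm _ _
      _ ≤ (L * ‖m ω - Em‖) * ‖x i ω‖ :=
          mul_le_mul_of_nonneg_right (hF _ _) (norm_nonneg _)
      _ = L * (‖m ω - Em‖ * ‖x i ω‖) := mul_assoc _ _ _
  have hcs : ∫ ω, ‖m ω - Em‖ * ‖x i ω‖ ∂μ
      ≤ Real.sqrt (∫ ω, ‖m ω - Em‖ ^ 2 ∂μ) * Real.sqrt (∫ ω, ‖x i ω‖ ^ 2 ∂μ) :=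
    integral_mul_le_sqrt_mul_sqrt (fun ω => norm_nonneg _) (fun ω => norm_nonneg _)
      ((hmint.sub (integrable_const Em)).1.norm) ((hint i).1.norm) hvarint (hsq i)
  have hfinal : ∫ ω, L * (‖m ω - Em‖ * ‖x i ω‖) ∂μ ≤ L * (Real.sqrt (C / N) * Real.sqrt C) := by
    rw [integral_const_mul]
    refine mul_le_mul_of_nonneg_left ?_ hL
    calc ∫ ω, ‖m ω - Em‖ * ‖x i ω‖ ∂μ
        ≤ Real.sqrt (∫ ω, ‖m ω - Em‖ ^ 2 ∂μ) * Real.sqrt (∫ ω, ‖x i ω‖ ^ 2 ∂μ) := hcs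
      _ ≤ Real.sqrt (C / N) * Real.sqrt C := by
          refine mul_le_mul (Real.sqrt_le_sqrt hvar) (Real.sqrt_le_sqrt (hx2 i))
            (Real.sqrt_nonneg _) (Real.sqrt_nonneg _)
  refine (habs.trans hfinal).trans ?_
  have h2 : 0 ≤ 2 * L * C / N := by positivity
  have h3 : L * (Real.sqrt (C / N) * Real.sqrt C) = Real.sqrt C * (L * Real.sqrt (C / N)) := by
    ring
  linarith
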